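/- For any index k = (k_1,…,k_r) of positive integers and any positive integer N, the multiple harmonic sum ζ_{<N}(k) = ∑_{0<m_1<⋯<m_r<N} ∏_i 1/m_i^{k_i} equals the sum ζ^♭_{<N}(k) = ∑ ∏_{i=1}^r 1/((N-n_{i1}) n_{i2} ⋯ n_{i k_i}), where the latter sum runs over integers n_{ij} ∈ [1,N-1] satisfying n_{i1} ≤ n_{i2} ≤ ⋯ ≤ n_{i k_i} for each i and n_{i k_i} < n_{(i+1)1} for 1 ≤ i < r. -/

import Mathlib

/-- Auxiliary recursion: `zetaAux M t` sums over `0 < m₁ < ⋯ < m_r < M` where the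
exponent list `t` lists the exponents from the *largest* variable downwards. -/
def zetaAux : ℕ → List ℕ → ℚ
  | _, [] => 1
  | M, k :: t => ∑ m ∈ Finset.Ioo 0 M, (1 / (m : ℚ) ^ k) * zetaAux m t

/-- The multiple harmonic sum `ζ_{<N}(k₁,…,k_r) = ∑_{0<m₁<⋯<m_r<N} ∏ᵢ 1/mᵢ^{kᵢ}`. -/
def zetaMHS (N : ℕ) (ks : List ℕ) : ℚ := zetaAux N ks.reverse

/-- Auxiliary recursion for the ♭-sum.  `flatAux N M j t` sums over the remaining `j`
(bottom) variables `n₁ ≤ ⋯ ≤ n_j < M` of the current block (the bottom variable carries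
the factor `1/(N - n₁)`, the others `1/n`), followed by the blocks listed in `t`
(given in reverse order, so that for the next block `k` the condition
`n_{k-top} < n₁` holds). -/
def flatAux (N : ℕ) : ℕ → ℕ → List ℕ → ℚ
  | _, 0, [] => 1
  | M, 0, k :: t => flatAux N M k t
  | M, 1, t => ∑ n ∈ Finset.Ioo 0 M, (1 / ((N : ℚ) - (n : ℚ))) * flatAux N n 0 t
  | M, (j+2), t => ∑ n ∈ Finset.Ioo 0 M, (1 / (n : ℚ)) * flatAux N (n+1) (j+1) t
  termination_by _ j t => (t.length, j)

/-- The ♭-sum `ζ♭_{<N}(k₁,…,k_r)`: the sum of `∏ᵢ 1/((N-n_{i1})·n_{i2}⋯n_{i k_i})` over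
`n_{ij} ∈ [1,N-1]` with `n_{i1} ≤ ⋯ ≤ n_{i k_i}` for each `i` and
`n_{i k_i} < n_{(i+1)1}` for `1 ≤ i < r`. -/
def zetaFlat (N : ℕ) (ks : List ℕ) : ℚ := flatAux N N 0 ks.reverse


lemma hockey (m K : ℕ) : ∑ i ∈ Finset.range K, Nat.choose i m = Nat.choose K (m+1) := by
  induction K with
  | zero => simp
  | succ K ih =>
    rw [Finset.sum_range_succ, ih, Nat.choose_succ_succ]
    simp [Nat.succ_eq_add_one]
    omega

lemma sumT2 (m M : ℕ) (hm : 0 < m) :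
    ∑ n ∈ Finset.Ioo 0 M, (Nat.choose n m : ℚ) / n = (Nat.choose (M-1) m : ℚ) / m := by
  have h1 : ∀ n ∈ Finset.Ioo 0 M, (Nat.choose n m : ℚ) / n = (Nat.choose (n-1) (m-1) : ℚ) / m := by
    intro n hn
    simp only [Finset.mem_Ioo] at hn
    have hnat : (n-1).succ * (n-1).choose (m-1) = (n-1).succ.choose (m-1).succ * (m-1).succ :=
      Nat.add_one_mul_choose_eq (n-1) (m-1)
    have e1 : (n-1).succ = n := by omega
    have e2 : (m-1).succ = m := by omega
    rw [e1, e2] at hnat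
    rw [div_eq_div_iff (by exact_mod_cast hn.1.ne') (by exact_mod_cast hm.ne')]
    exact_mod_cast (mul_comm (n:ℕ) ((n-1).choose (m-1)) ▸ hnat.symm)
  rw [Finset.sum_congr rfl h1, ← Finset.sum_div]
  congr 1
  rw [← Nat.cast_sum]
  congr 1
  have h2 : Finset.Ioo 0 M = Finset.Ico 1 M := by ext x; simp; omega
  rw [h2, Finset.sum_Ico_eq_sum_range]
  have h3 : ∀ i, Nat.choose (1 + i - 1) (m-1) = Nat.choose i (m-1) := by intro i; congr 1; omega
  simp only [h3]
  rw [hockey]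
  congr 1
  omega


lemma sumS (N M : ℕ) (hM1 : 0 < M) (hM : M ≤ N - 1) :
    ∀ j m, m + j = N - 1 →
      ∑ a ∈ Finset.Ioo m N, ((M-1).choose (a-1) : ℚ) / (a * ((N-1).choose a)) =
        ((M-1).choose m : ℚ) / (((N:ℚ) - M) * ((N-1).choose m)) := by
  have hN : 2 ≤ N := by omega
  intro j
  induction j with
  | zero =>
    intro m hm
    have he : Finset.Ioo m N = ∅ := by ext x; simp; omega
    have hz : (M-1).choose m = 0 := Nat.choose_eq_zero_of_lt (by omega)
    rw [he, Finset.sum_empty, hz]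
    simp
  | succ j ih =>
    intro m hm
    have hm1 : m + 1 ≤ N - 1 := by omega
    have hsplit : Finset.Ioo m N = insert (m+1) (Finset.Ioo (m+1) N) := by
      ext x; simp; omega
    rw [hsplit, Finset.sum_insert (by simp), ih (m+1) (by omega)]
    have e1 : m + 1 - 1 = m := by omega
    rw [e1]
    -- algebra
    have hc1 : ((N-1).choose m : ℚ) ≠ 0 := by
      exact_mod_cast (Nat.choose_pos (by omega : m ≤ N - 1)).ne'
    have hc2 : ((N-1).choose (m+1) : ℚ) ≠ 0 := by
      exact_mod_cast (Nat.choose_pos hm1).ne'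
    have hd : ((N:ℚ) - M) ≠ 0 := by
      have : (M:ℚ) < N := by exact_mod_cast (by omega : M < N)
      linarith
    have hm0 : ((m:ℚ) + 1) ≠ 0 := by positivity
    have key2 : ((N-1).choose (m+1) : ℚ) * (m+1) = ((N-1).choose m : ℚ) * ((N:ℚ) - 1 - m) := by
      have h := Nat.choose_succ_right_eq (N-1) m
      have hcast : ((N - 1 - m : ℕ) : ℚ) = (N:ℚ) - 1 - m := by
        rw [Nat.cast_sub (by omega), Nat.cast_sub (by omega)]
        push_cast; ring
      calc ((N-1).choose (m+1) : ℚ) * (m+1) = (((N-1).choose (m+1) * (m+1) : ℕ) : ℚ) := by push_cast; ring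
        _ = (((N-1).choose m * (N - 1 - m) : ℕ) : ℚ) := by rw [h]
        _ = ((N-1).choose m : ℚ) * ((N:ℚ) - 1 - m) := by push_cast [hcast]; ring
    by_cases hmM : m < M
    · have key3 : ((M-1).choose (m+1) : ℚ) * (m+1) = ((M-1).choose m : ℚ) * ((M:ℚ) - 1 - m) := by
        have h := Nat.choose_succ_right_eq (M-1) m
        have hcast : ((M - 1 - m : ℕ) : ℚ) = (M:ℚ) - 1 - m := by
          rw [Nat.cast_sub (by omega), Nat.cast_sub (by omega)]
          push_cast; ring
        calc ((M-1).choose (m+1) : ℚ) * (m+1) = (((M-1).choose (m+1) * (m+1) : ℕ) : ℚ) := by push_cast; ring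
          _ = (((M-1).choose m * (M - 1 - m) : ℕ) : ℚ) := by rw [h]
          _ = ((M-1).choose m : ℚ) * ((M:ℚ) - 1 - m) := by push_cast [hcast]; ring
      rw [div_add_div _ _ (by push_cast; exact mul_ne_zero hm0 hc2) (mul_ne_zero hd hc2),
        div_eq_div_iff (by push_cast; exact mul_ne_zero (mul_ne_zero hm0 hc2) (mul_ne_zero hd hc2)) (mul_ne_zero hd hc1)]
      push_cast
      linear_combination (((N:ℚ)-M) * ((N-1).choose (m+1):ℚ) * ((N-1).choose m:ℚ)) * key3 - (((N:ℚ)-M) * ((N-1).choose (m+1):ℚ) * ((M-1).choose m:ℚ)) * key2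
    · have hz1 : (M-1).choose m = 0 := Nat.choose_eq_zero_of_lt (by omega)
      have hz2 : (M-1).choose (m+1) = 0 := Nat.choose_eq_zero_of_lt (by omega)
      rw [hz1, hz2]
      simp


lemma sumT1 (N : ℕ) (hN : 0 < N) (m : ℕ) (hm : m ≤ N - 1) :
    ∀ M, M ≤ N →
      ∑ a ∈ Finset.Ioo m N, ((M-1).choose a : ℚ) / (a * ((N-1).choose a)) =
        ∑ n ∈ Finset.Ioo 0 M, ((n-1).choose m : ℚ) / (((N-1).choose m) * ((N:ℚ) - n)) := by
  intro M
  induction M with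
  | zero =>
    intro _
    have l : ∑ a ∈ Finset.Ioo m N, ((0-1 : ℕ).choose a : ℚ) / (a * ((N-1).choose a)) = 0 := by
      apply Finset.sum_eq_zero
      intro a ha
      simp only [Finset.mem_Ioo] at ha
      have : (0-1 : ℕ).choose a = 0 := Nat.choose_eq_zero_of_lt (by omega)
      rw [this]; simp
    rw [l]; simp
  | succ M ih =>
    intro hM1
    by_cases hM0 : M = 0
    · subst hM0
      have l : ∑ a ∈ Finset.Ioo m N, ((0+1-1 : ℕ).choose a : ℚ) / (a * ((N-1).choose a)) = 0 := by
        apply Finset.sum_eq_zero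
        intro a ha
        simp only [Finset.mem_Ioo] at ha
        have : (0+1-1 : ℕ).choose a = 0 := Nat.choose_eq_zero_of_lt (by omega)
        rw [this]; simp
      rw [l, show Finset.Ioo 0 (0+1) = (∅ : Finset ℕ) from by ext x; simp; omega, Finset.sum_empty]
    · have hMpos : 0 < M := by omega
      have hMN : M ≤ N - 1 := by omega
      have key : ∀ a ∈ Finset.Ioo m N,
          ((M+1-1).choose a : ℚ) / (a * ((N-1).choose a)) =
            ((M-1).choose a : ℚ) / (a * ((N-1).choose a)) +
              ((M-1).choose (a-1) : ℚ) / (a * ((N-1).choose a)) := by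
        intro a ha
        simp only [Finset.mem_Ioo] at ha
        rw [← add_div]
        congr 1
        have e : M.choose a = (M-1).choose (a-1) + (M-1).choose a := by
          have e1 : M = (M-1) + 1 := by omega
          have e2 : a = (a-1) + 1 := by omega
          rw [e1, e2, Nat.choose_succ_succ]
          congr 1 <;> omega
        rw [show M + 1 - 1 = M from rfl, e]
        push_cast; ring
      rw [Finset.sum_congr rfl key, Finset.sum_add_distrib, ih (by omega),
        sumS N M hMpos hMN (N-1-m) m (by omega)]
      have hins : Finset.Ioo 0 (M+1) = insert M (Finset.Ioo 0 M) := by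
        ext x; simp; omega
      rw [hins, Finset.sum_insert (by simp)]
      have : ((M-1).choose m : ℚ) / (((N:ℚ) - M) * ((N-1).choose m)) =
          ((M-1).choose m : ℚ) / (((N-1).choose m) * ((N:ℚ) - M)) := by ring
      rw [this]
      ring

lemma swapIoo (N : ℕ) (f : ℕ → ℕ → ℚ) :
    ∑ a ∈ Finset.Ioo 0 N, ∑ b ∈ Finset.Ioo 0 a, f a b =
      ∑ b ∈ Finset.Ioo 0 N, ∑ a ∈ Finset.Ioo b N, f a b := by
  have h1 : ∀ a ∈ Finset.Ioo 0 N, ∑ b ∈ Finset.Ioo 0 a, f a b =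
      ∑ b ∈ Finset.Ioo 0 N, if b < a then f a b else 0 := by
    intro a ha
    have hs : (Finset.Ioo 0 N).filter (fun b => b < a) = Finset.Ioo 0 a := by
      ext x; simp only [Finset.mem_filter, Finset.mem_Ioo] at *; omega
    rw [← hs, Finset.sum_filter]
  have h2 : ∀ b ∈ Finset.Ioo 0 N, ∑ a ∈ Finset.Ioo b N, f a b =
      ∑ a ∈ Finset.Ioo 0 N, if b < a then f a b else 0 := by
    intro b hb
    have hs : (Finset.Ioo 0 N).filter (fun a => b < a) = Finset.Ioo b N := by
      ext x; simp only [Finset.mem_filter, Finset.mem_Ioo] at *; omega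
    rw [← hs, Finset.sum_filter]
  rw [Finset.sum_congr rfl h1, Finset.sum_comm]
  exact Finset.sum_congr rfl (fun b hb => (h2 b hb).symm)

def Atil (N M : ℕ) : List ℕ → ℚ
  | [] => 1
  | k :: w => ∑ a ∈ Finset.Ioo 0 N,
      (1 / (a:ℚ)^k) * (((M-1).choose a : ℚ) / ((N-1).choose a)) * zetaAux a w

lemma sumT1' (N : ℕ) (hN : 0 < N) (m : ℕ) (hm : m < N) (M : ℕ) (hMN : M ≤ N) :
    ∑ a ∈ Finset.Ioo m N, (1/(a:ℚ)) * (((M-1).choose a : ℚ) / ((N-1).choose a)) =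
      ∑ n ∈ Finset.Ioo 0 M, (1 / ((N:ℚ) - n)) * (((n-1).choose m : ℚ) / ((N-1).choose m)) := by
  have l : ∀ a ∈ Finset.Ioo m N, (1/(a:ℚ)) * (((M-1).choose a : ℚ) / ((N-1).choose a)) =
      ((M-1).choose a : ℚ) / (a * ((N-1).choose a)) := fun a _ => by
    rw [div_mul_div_comm, one_mul]
  have r : ∀ n ∈ Finset.Ioo 0 M, (1 / ((N:ℚ) - n)) * (((n-1).choose m : ℚ) / ((N-1).choose m)) =
      ((n-1).choose m : ℚ) / (((N-1).choose m) * ((N:ℚ) - n)) := fun n _ => by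
    rw [div_mul_div_comm, one_mul, mul_comm ((N:ℚ) - (n:ℚ))]
  rw [Finset.sum_congr rfl l, Finset.sum_congr rfl r]
  exact sumT1 N hN m (by omega) M hMN

lemma step1 (N : ℕ) (hN : 0 < N) (w : List ℕ) (M : ℕ) (hMN : M ≤ N) :
    ∑ a ∈ Finset.Ioo 0 N, (1/(a:ℚ)) * (((M-1).choose a : ℚ) / ((N-1).choose a)) * zetaAux a w =
      ∑ n ∈ Finset.Ioo 0 M, (1 / ((N:ℚ) - n)) * Atil N n w := by
  cases w with
  | nil =>
    simp only [zetaAux, Atil, mul_one]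
    rw [sumT1' N hN 0 hN M hMN]
    apply Finset.sum_congr rfl
    intro n hn
    simp
  | cons k w =>
    simp only [Atil]
    have l : ∀ a ∈ Finset.Ioo 0 N,
        (1/(a:ℚ)) * (((M-1).choose a : ℚ) / ((N-1).choose a)) * zetaAux a (k :: w) =
        ∑ b ∈ Finset.Ioo 0 a,
          ((1/(a:ℚ)) * (((M-1).choose a : ℚ) / ((N-1).choose a))) * ((1 / (b:ℚ)^k) * zetaAux b w) := by
      intro a _
      rw [show zetaAux a (k :: w) = ∑ b ∈ Finset.Ioo 0 a, (1 / (b : ℚ) ^ k) * zetaAux b w from rfl,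
        Finset.mul_sum]
    rw [Finset.sum_congr rfl l,
      swapIoo N (fun a b => ((1/(a:ℚ)) * (((M-1).choose a : ℚ) / ((N-1).choose a))) * ((1 / (b:ℚ)^k) * zetaAux b w))]
    have m : ∀ b ∈ Finset.Ioo 0 N,
        ∑ a ∈ Finset.Ioo b N,
          ((1/(a:ℚ)) * (((M-1).choose a : ℚ) / ((N-1).choose a))) * ((1 / (b:ℚ)^k) * zetaAux b w)
        = ∑ n ∈ Finset.Ioo 0 M,
            ((1 / ((N:ℚ) - n)) * (((n-1).choose b : ℚ) / ((N-1).choose b))) * ((1 / (b:ℚ)^k) * zetaAux b w) := by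
      intro b hb
      simp only [Finset.mem_Ioo] at hb
      rw [← Finset.sum_mul, ← Finset.sum_mul, sumT1' N hN b hb.2 M hMN]
    rw [Finset.sum_congr rfl m, Finset.sum_comm]
    apply Finset.sum_congr rfl
    intro n _
    rw [Finset.mul_sum]
    apply Finset.sum_congr rfl
    intro b _
    ring

lemma block (N : ℕ) (hN : 0 < N) (w : List ℕ)
    (ihw : ∀ M, 0 < M → M ≤ N → Atil N M w = flatAux N M 0 w) :
    ∀ j M, 0 < M → M ≤ N →
      ∑ a ∈ Finset.Ioo 0 N,
          (1/(a:ℚ)^(j+1)) * (((M-1).choose a : ℚ) / ((N-1).choose a)) * zetaAux a w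
        = flatAux N M (j+1) w := by
  intro j
  induction j with
  | zero =>
    intro M hM hMN
    rw [flatAux]
    simp only [zero_add, pow_one]
    rw [step1 N hN w M hMN]
    apply Finset.sum_congr rfl
    intro n hn
    simp only [Finset.mem_Ioo] at hn
    rw [ihw n hn.1 (by omega)]
  | succ j ih =>
    intro M hM hMN
    rw [flatAux]
    have hstep : ∀ n ∈ Finset.Ioo 0 M, (1/(n:ℚ)) * flatAux N (n+1) (j+1) w =
        (1/(n:ℚ)) * ∑ a ∈ Finset.Ioo 0 N,
          (1/(a:ℚ)^(j+1)) * (((n+1-1).choose a : ℚ) / ((N-1).choose a)) * zetaAux a w := by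
      intro n hn
      simp only [Finset.mem_Ioo] at hn
      rw [ih (n+1) (by omega) (by omega)]
    rw [Finset.sum_congr rfl hstep]
    simp only [Finset.mul_sum]
    rw [Finset.sum_comm]
    apply Finset.sum_congr rfl
    intro a ha
    simp only [Finset.mem_Ioo] at ha
    have hterm : ∀ n ∈ Finset.Ioo 0 M,
        (1/(n:ℚ)) * ((1/(a:ℚ)^(j+1)) * (((n+1-1).choose a : ℚ) / ((N-1).choose a)) * zetaAux a w)
          = ((1/(a:ℚ)^(j+1)) * (1/((N-1).choose a : ℚ)) * zetaAux a w) * ((n.choose a : ℚ)/n) := by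
      intro n hn
      simp only [Nat.add_sub_cancel]
      ring
    rw [Finset.sum_congr rfl hterm, ← Finset.mul_sum, sumT2 a M ha.1, pow_succ]
    ring

lemma mainMSW (N : ℕ) (hN : 0 < N) : ∀ w : List ℕ, (∀ a ∈ w, 0 < a) → ∀ M, 0 < M → M ≤ N →
    Atil N M w = flatAux N M 0 w := by
  intro w
  induction w with
  | nil =>
    intro _ M hM hMN
    simp only [Atil]
    rw [flatAux]
  | cons k w ih =>
    intro hpos M hM hMN
    rw [flatAux]
    have hk : 0 < k := hpos k List.mem_cons_self
    obtain ⟨k', rfl⟩ : ∃ k', k = k' + 1 := ⟨k - 1, by omega⟩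
    simp only [Atil]
    exact block N hN w
      (fun M h1 h2 => ih (fun a ha => hpos a (List.mem_cons_of_mem _ ha)) M h1 h2) k' M hM hMN

lemma AtilN (N : ℕ) (hN : 0 < N) (w : List ℕ) : Atil N N w = zetaAux N w := by
  cases w with
  | nil => simp [Atil, zetaAux]
  | cons k w =>
    simp only [Atil]
    rw [show zetaAux N (k::w) = ∑ m ∈ Finset.Ioo 0 N, (1 / (m : ℚ) ^ k) * zetaAux m w from rfl]
    apply Finset.sum_congr rfl
    intro a ha
    simp only [Finset.mem_Ioo] at ha
    have hc : ((N-1).choose a : ℚ) ≠ 0 := by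
      exact_mod_cast (Nat.choose_pos (by omega : a ≤ N-1)).ne'
    rw [div_self hc, mul_one]

/-- The Maesaka–Seki–Watanabe formula: `ζ_{<N}(k) = ζ♭_{<N}(k)` for every index `k`
(a finite tuple of positive integers) and every integer `N > 0`. -/
theorem MSW_formula (N : ℕ) (hN : 0 < N) (ks : List ℕ) (hks : ∀ a ∈ ks, 0 < a) :
    zetaMHS N ks = zetaFlat N ks := by
  unfold zetaMHS zetaFlat
  rw [← AtilN N hN ks.reverse,
    mainMSW N hN ks.reverse (fun a ha => hks a (List.mem_reverse.mp ha)) N hN le_rfl]
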